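/- Let j ≥ 1 be an integer and let ξ, η ∈ ℝ³ be such that either (η lies in the support of χ_j^− and ξ − η lies in the support of χ_j^+) or (η lies in the support of χ_j^+ and ξ − η lies in the support of χ_j^−). Then −2 ≤ (ξ₂ − η₂)η₂³ / (|ξ − η| |η|³) + (ξ₂ − η₂)³η₂ / (|ξ − η|³ |η|) ≤ −1/256. -/
import Mathlib


open MeasureTheory ENNReal Real Filter
open scoped RealInnerProductSpace

noncomputable section

/-- Physical/frequency space ℝ³ with the Euclidean norm. -/
abbrev R3 := EuclideanSpace ℝ (Fin 3)

/-- Vector values ℂ⁶ = ℂ³ × ℂ³ (velocity and micro-rotation components). -/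
abbrev C6 := (Fin 3 ⊕ Fin 3) → ℂ

/-- η lies in the support of χ_j^+, the cube {|ξ₁| ≤ 1, |ξ₂ − 2^j| ≤ 1, |ξ₃| ≤ 1}. -/
def InSuppP (j : ℤ) (η : R3) : Prop :=
  |η 0| ≤ 1 ∧ |η 1 - 2 ^ j| ≤ 1 ∧ |η 2| ≤ 1

/-- η lies in the support of χ_j^−, the cube {|ξ₁| ≤ 1, |ξ₂ + 2^j| ≤ 1, |ξ₃| ≤ 1}. -/
def InSuppM (j : ℤ) (η : R3) : Prop :=
  |η 0| ≤ 1 ∧ |η 1 + 2 ^ j| ≤ 1 ∧ |η 2| ≤ 1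

lemma cube_norm (v : R3) (h0 : |v 0| ≤ 1) (h2 : |v 2| ≤ 1) (hc : 1 ≤ |v 1|) :
    |v 1| ≤ ‖v‖ ∧ ‖v‖ ≤ Real.sqrt 3 * |v 1| := by
  have hnorm : ‖v‖ = Real.sqrt ((v 0)^2 + ((v 1)^2 + ((v 2)^2 + 0))) := by
    rw [EuclideanSpace.norm_eq]
    congr 1
    rw [Fin.sum_univ_three]
    simp [sq_abs]
    ring
  constructor
  · rw [hnorm]
    rw [Real.le_sqrt (abs_nonneg _)]
    · nlinarith [sq_nonneg (v 0), sq_nonneg (v 2), sq_abs (v 1)]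
    · positivity
  · rw [hnorm]
    have h1 : (v 0)^2 + ((v 1)^2 + ((v 2)^2 + 0)) ≤ 3 * (v 1)^2 := by
      nlinarith [sq_abs (v 0), sq_abs (v 2), sq_abs (v 1), abs_nonneg (v 0), abs_nonneg (v 2)]
    calc Real.sqrt ((v 0)^2 + ((v 1)^2 + ((v 2)^2 + 0))) ≤ Real.sqrt (3 * (v 1)^2) :=
          Real.sqrt_le_sqrt h1
      _ = Real.sqrt 3 * |v 1| := by
          rw [Real.sqrt_mul (by norm_num), Real.sqrt_sq_eq_abs]

lemma key (a b nA nB : ℝ) (ha : 1 ≤ a) (hb : 1 ≤ b)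
    (hA1 : a ≤ nA) (hA2 : nA ≤ Real.sqrt 3 * a)
    (hB1 : b ≤ nB) (hB2 : nB ≤ Real.sqrt 3 * b) :
    -2 ≤ -(a*b^3/(nA*nB^3)) - a^3*b/(nA^3*nB) ∧
      -(a*b^3/(nA*nB^3)) - a^3*b/(nA^3*nB) ≤ -(1/256) := by
  have hs : Real.sqrt 3 ^ 2 = 3 := Real.sq_sqrt (by norm_num)
  have hs0 : 0 ≤ Real.sqrt 3 := Real.sqrt_nonneg 3
  have hnA : 0 < nA := lt_of_lt_of_le (by linarith) hA1
  have hnB : 0 < nB := lt_of_lt_of_le (by linarith) hB1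
  have ha0 : 0 < a := by linarith
  have hb0 : 0 < b := by linarith
  have hB3 : nB^3 ≤ (Real.sqrt 3 * b)^3 := pow_le_pow_left₀ (le_of_lt hnB) hB2 3
  have hA3 : nA^3 ≤ (Real.sqrt 3 * a)^3 := pow_le_pow_left₀ (le_of_lt hnA) hA2 3
  have hb3 : b^3 ≤ nB^3 := pow_le_pow_left₀ (le_of_lt hb0) hB1 3
  have ha3 : a^3 ≤ nA^3 := pow_le_pow_left₀ (le_of_lt ha0) hA1 3
  have hX1 : a*b^3/(nA*nB^3) ≤ 1 := by
    rw [div_le_one (by positivity)]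
    exact mul_le_mul hA1 hb3 (by positivity) (by positivity)
  have hY1 : a^3*b/(nA^3*nB) ≤ 1 := by
    rw [div_le_one (by positivity)]
    nlinarith [pow_pos ha0 3, pow_pos hnA 3]
  have hX2 : 1/9 ≤ a*b^3/(nA*nB^3) := by
    rw [le_div_iff₀ (by positivity)]
    have : nA * nB^3 ≤ 9 * (a * b^3) := by
      have h1 : nA * nB^3 ≤ (Real.sqrt 3 * a) * ((Real.sqrt 3 * b)^3) := by
        apply mul_le_mul hA2 hB3 (by positivity) (by positivity)
      have h2 : Real.sqrt 3 * a * (Real.sqrt 3 * b)^3 = 9 * (a*b^3) := by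
        have e : Real.sqrt 3 * a * (Real.sqrt 3 * b)^3 = (Real.sqrt 3 ^ 2)^2 * (a*b^3) := by ring
        rw [e, hs]; ring
      linarith
    linarith
  have hY0 : 0 ≤ a^3*b/(nA^3*nB) := by positivity
  refine ⟨by linarith, by linarith⟩

/-- For an integer j ≥ 1, if η ∈ supp χ_j^− and ξ − η ∈ supp χ_j^+ (or with the
roles of + and − exchanged), then
−2 ≤ (ξ₂ − η₂)η₂³/(|ξ − η||η|³) + (ξ₂ − η₂)³η₂/(|ξ − η|³|η|) ≤ −1/256. -/
theorem interaction_sign_bound_cubic (j : ℤ) (hj : 1 ≤ j) (ξ η : R3)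
    (h : (InSuppM j η ∧ InSuppP j (ξ - η)) ∨ (InSuppP j η ∧ InSuppM j (ξ - η))) :
    -2 ≤ (ξ 1 - η 1) * (η 1) ^ 3 / (‖ξ - η‖ * ‖η‖ ^ 3) +
        (ξ 1 - η 1) ^ 3 * η 1 / (‖ξ - η‖ ^ 3 * ‖η‖) ∧
      (ξ 1 - η 1) * (η 1) ^ 3 / (‖ξ - η‖ * ‖η‖ ^ 3) +
          (ξ 1 - η 1) ^ 3 * η 1 / (‖ξ - η‖ ^ 3 * ‖η‖) ≤ -(1 / 256) := by
  have hsub1 : (ξ - η) 1 = ξ 1 - η 1 := rfl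
  have h2j : (2:ℝ) ≤ 2 ^ j := by
    calc (2:ℝ) = 2 ^ (1:ℤ) := by norm_num
      _ ≤ 2 ^ j := zpow_le_zpow_right₀ (by norm_num) hj
  rcases h with ⟨⟨hη0, hη1, hη2⟩, hA0, hA1, hA2⟩ | ⟨⟨hη0, hη1, hη2⟩, hA0, hA1, hA2⟩
  · rw [hsub1] at hA1
    have hb := abs_le.1 hη1
    have haa := abs_le.1 hA1
    have ha1 : 1 ≤ ξ 1 - η 1 := by linarith
    have hb1 : 1 ≤ -(η 1) := by linarith
    obtain ⟨hAl, hAu⟩ := cube_norm (ξ - η) hA0 hA2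
      (by rw [hsub1]; exact le_trans ha1 (le_abs_self _))
    obtain ⟨hBl, hBu⟩ := cube_norm η hη0 hη2 (le_trans hb1 (neg_le_abs _))
    rw [hsub1, abs_of_nonneg (by linarith : (0:ℝ) ≤ ξ 1 - η 1)] at hAl hAu
    rw [abs_of_nonpos (by linarith : η 1 ≤ 0)] at hBl hBu
    obtain ⟨K1, K2⟩ := key (ξ 1 - η 1) (-(η 1)) ‖ξ - η‖ ‖η‖ ha1 hb1 hAl hAu hBl hBu
    have e : (ξ 1 - η 1) * (η 1) ^ 3 / (‖ξ - η‖ * ‖η‖ ^ 3) +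
        (ξ 1 - η 1) ^ 3 * η 1 / (‖ξ - η‖ ^ 3 * ‖η‖) =
        -((ξ 1 - η 1) * (-(η 1)) ^ 3 / (‖ξ - η‖ * ‖η‖ ^ 3)) -
        (ξ 1 - η 1) ^ 3 * (-(η 1)) / (‖ξ - η‖ ^ 3 * ‖η‖) := by ring
    rw [e]
    exact ⟨K1, K2⟩
  · rw [hsub1] at hA1
    have hb := abs_le.1 hη1
    have haa := abs_le.1 hA1
    have ha1 : 1 ≤ -(ξ 1 - η 1) := by linarith
    have hb1 : 1 ≤ η 1 := by linarith
    obtain ⟨hAl, hAu⟩ := cube_norm (ξ - η) hA0 hA2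
      (by rw [hsub1]; exact le_trans ha1 (neg_le_abs _))
    obtain ⟨hBl, hBu⟩ := cube_norm η hη0 hη2 (le_trans hb1 (le_abs_self _))
    rw [hsub1, abs_of_nonpos (by linarith : ξ 1 - η 1 ≤ 0)] at hAl hAu
    rw [abs_of_nonneg (by linarith : (0:ℝ) ≤ η 1)] at hBl hBu
    obtain ⟨K1, K2⟩ := key (-(ξ 1 - η 1)) (η 1) ‖ξ - η‖ ‖η‖ ha1 hb1 hAl hAu hBl hBu
    have e : (ξ 1 - η 1) * (η 1) ^ 3 / (‖ξ - η‖ * ‖η‖ ^ 3) +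
        (ξ 1 - η 1) ^ 3 * η 1 / (‖ξ - η‖ ^ 3 * ‖η‖) =
        -(-(ξ 1 - η 1) * (η 1) ^ 3 / (‖ξ - η‖ * ‖η‖ ^ 3)) -
        (-(ξ 1 - η 1)) ^ 3 * η 1 / (‖ξ - η‖ ^ 3 * ‖η‖) := by ring
    rw [e]
    exact ⟨K1, K2⟩
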